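/- Let λ₂ ≥ 0. If β* ∈ ℝ^p is a local minimizer of F (i.e., there exists δ > 0 such that F(β*) ≤ F(β) for all β ∈ ℝ^p with ‖β − β*‖₂ < δ), then β* is a generalized first-order stationary point of F: there exists a subgradient v of z ↦ ‖z − y‖_r at Xβ* such that β*_i · (Xᵀv)_i + 2λ₂ (β*_i)² + λ₁ q |β*_i|^q = 0 for every i = 1,…,p. -/

import Mathlib

/-- Index for the ℓ_r norm with r ∈ {1, 2, ∞}. -/
inductive LrIndex : Type
  | one | two | inf

/-- The ℓ_r norm on ℝ^n for r ∈ {1, 2, ∞}. -/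
noncomputable def lrNorm {n : ℕ} (r : LrIndex) (z : Fin n → ℝ) : ℝ :=
  match r with
  | .one => ∑ j, |z j|
  | .two => Real.sqrt (∑ j, (z j) ^ 2)
  | .inf => ⨆ j, |z j|

/-- `v` is a subgradient of `z ↦ ‖z − y‖_r` at `z₀`. -/
def IsSubgradAt {n : ℕ} (r : LrIndex) (y v z₀ : Fin n → ℝ) : Prop :=
  ∀ z : Fin n → ℝ,
    lrNorm r (z₀ - y) + ∑ j, v j * (z j - z₀ j) ≤ lrNorm r (z - y)

/-- The objective F(β) = ‖Xβ − y‖_r + λ₂‖β‖₂² + λ₁ Σᵢ |βᵢ|^q. -/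
noncomputable def objF {n p : ℕ} (r : LrIndex) (X : Matrix (Fin n) (Fin p) ℝ)
    (y : Fin n → ℝ) (lam1 lam2 q : ℝ) (β : Fin p → ℝ) : ℝ :=
  lrNorm r (X.mulVec β - y) + lam2 * ∑ i, (β i) ^ 2 + lam1 * ∑ i, |β i| ^ q

/-- `β` is a generalized first-order stationary point of F. -/
def IsGenStat {n p : ℕ} (r : LrIndex) (X : Matrix (Fin n) (Fin p) ℝ)
    (y : Fin n → ℝ) (lam1 lam2 q : ℝ) (β : Fin p → ℝ) : Prop :=
  ∃ v : Fin n → ℝ, IsSubgradAt r y v (X.mulVec β) ∧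
    ∀ i : Fin p,
      β i * (∑ j, X j i * v j) + 2 * lam2 * (β i) ^ 2 + lam1 * q * |β i| ^ q = 0

lemma lrNorm_two_eq {n : ℕ} (z : Fin n → ℝ) :
    lrNorm .two z = ‖(WithLp.equiv 2 (Fin n → ℝ)).symm z‖ := by
  rw [EuclideanSpace.norm_eq]
  simp [lrNorm, sq_abs]

lemma lrNorm_add_le {n : ℕ} (r : LrIndex) (a b : Fin n → ℝ) :
    lrNorm r (a + b) ≤ lrNorm r a + lrNorm r b := by
  cases r with
  | one =>
    simp only [lrNorm]
    rw [← Finset.sum_add_distrib]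
    exact Finset.sum_le_sum fun j _ => abs_add_le _ _
  | two =>
    rw [lrNorm_two_eq, lrNorm_two_eq, lrNorm_two_eq, WithLp.equiv_symm_apply, WithLp.toLp_add]
    exact norm_add_le _ _
  | inf =>
    rcases isEmpty_or_nonempty (Fin n) with he | hne
    · simp [lrNorm, Real.iSup_of_isEmpty]
    · simp only [lrNorm]
      apply ciSup_le
      intro j
      calc |(a + b) j| ≤ |a j| + |b j| := abs_add_le _ _
        _ ≤ _ := add_le_add
            (le_ciSup (f := fun j => |a j|) (Set.Finite.bddAbove (Set.finite_range _)) j)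
            (le_ciSup (f := fun j => |b j|) (Set.Finite.bddAbove (Set.finite_range _)) j)

lemma lrNorm_smul {n : ℕ} (r : LrIndex) {c : ℝ} (hc : 0 ≤ c) (a : Fin n → ℝ) :
    lrNorm r (c • a) = c * lrNorm r a := by
  cases r with
  | one =>
    simp only [lrNorm, Pi.smul_apply, smul_eq_mul, abs_mul, abs_of_nonneg hc,
      Finset.mul_sum]
  | two =>
    rw [lrNorm_two_eq, lrNorm_two_eq, WithLp.equiv_symm_apply, WithLp.toLp_smul, norm_smul,
      Real.norm_eq_abs, abs_of_nonneg hc]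
  | inf =>
    simp only [lrNorm, Pi.smul_apply, smul_eq_mul, abs_mul, abs_of_nonneg hc]
    rw [Real.mul_iSup_of_nonneg hc]

lemma lrNorm_comb {n : ℕ} (r : LrIndex) (a b : Fin n → ℝ) {s : ℝ}
    (h0 : 0 ≤ s) (h1 : s ≤ 1) :
    lrNorm r ((1 - s) • a + s • b) ≤ (1 - s) * lrNorm r a + s * lrNorm r b := by
  calc lrNorm r ((1 - s) • a + s • b)
      ≤ lrNorm r ((1 - s) • a) + lrNorm r (s • b) := lrNorm_add_le r _ _
    _ = _ := by rw [lrNorm_smul r (by linarith) a, lrNorm_smul r h0 b]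

set_option maxHeartbeats 1600000 in
theorem local_min_is_gen_stationary {n p : ℕ} (hn : 0 < n) (hp : 0 < p)
    (r : LrIndex) (X : Matrix (Fin n) (Fin p) ℝ) (y : Fin n → ℝ)
    (lam1 lam2 q : ℝ) (hlam1 : 0 < lam1) (hlam2 : 0 ≤ lam2)
    (hq0 : 0 < q) (hq1 : q < 1) (βs : Fin p → ℝ)
    (hmin : ∃ δ : ℝ, 0 < δ ∧ ∀ β : Fin p → ℝ,
      Real.sqrt (∑ i, (β i - βs i) ^ 2) < δ →
      objF r X y lam1 lam2 q βs ≤ objF r X y lam1 lam2 q β) :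
    IsGenStat r X y lam1 lam2 q βs := by
  classical
  obtain ⟨δ, hδ, hmin⟩ := hmin
  set z₀ : Fin n → ℝ := X.mulVec βs with hz₀def
  set g : (Fin n → ℝ) → ℝ := fun z => lrNorm r (z - y) with hgdef
  have hgapp : ∀ z : Fin n → ℝ, g z = lrNorm r (z - y) := fun _ => rfl
  have gcomb : ∀ (a b : Fin n → ℝ) (s : ℝ), 0 ≤ s → s ≤ 1 →
      g ((1 - s) • a + s • b) ≤ (1 - s) * g a + s * g b := by
    intro a b s h0 h1
    have h : (1 - s) • a + s • b - y = (1 - s) • (a - y) + s • (b - y) := by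
      funext j
      simp only [Pi.add_apply, Pi.sub_apply, Pi.smul_apply, smul_eq_mul]
      ring
    rw [hgapp, hgapp, hgapp, h]
    exact lrNorm_comb r _ _ h0 h1
  set w : Fin p → ℝ := fun i => -(2 * lam2 * (βs i) ^ 2 + lam1 * q * |βs i| ^ q)
    with hwdef
  set M : (Fin p → ℝ) →ₗ[ℝ] (Fin n → ℝ) :=
    X.mulVecLin ∘ₗ LinearMap.pi (fun i => βs i • LinearMap.proj i) with hMdef
  have hMapp : ∀ t : Fin p → ℝ, M t = X.mulVec (fun i => βs i * t i) := by
    intro t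
    simp only [hMdef, LinearMap.comp_apply, Matrix.mulVecLin_apply]
    congr 1
  -- KEY inequality
  have KEY : ∀ t : Fin p → ℝ, (∑ i, w i * t i) ≤ g (z₀ + M t) - g z₀ := by
    intro t
    set ψ : ℝ → ℝ := fun s => lam2 * ∑ i, (βs i) ^ 2 * (1 + s * t i) ^ 2
        + lam1 * ∑ i, |βs i| ^ q * (1 + s * t i) ^ q with hψdef
    have hbase : ∀ i : Fin p, HasDerivAt (fun s : ℝ => 1 + s * t i) (t i) 0 := by
      intro i
      simpa using (hasDerivAt_mul_const (t i)).const_add 1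
    have hder : HasDerivAt ψ (-(∑ i, w i * t i)) 0 := by
      have hpow : ∀ i : Fin p,
          HasDerivAt (fun s : ℝ => (1 + s * t i) ^ 2) (2 * t i) 0 := by
        intro i
        have h := (hbase i).pow 2
        norm_num at h
        exact h
      have hrpow : ∀ i : Fin p,
          HasDerivAt (fun s : ℝ => (1 + s * t i) ^ q) (q * t i) 0 := by
        intro i
        have houter : HasDerivAt (fun x : ℝ => x ^ q) (q * (1:ℝ) ^ (q - 1))
            (1 + 0 * t i) := by
          simpa using Real.hasDerivAt_rpow_const (x := (1:ℝ)) (p := q)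
            (Or.inl one_ne_zero)
        have h := houter.comp 0 (hbase i)
        simpa [Real.one_rpow, Function.comp_def] using h
      have h1 : HasDerivAt (fun s : ℝ => ∑ i, (βs i) ^ 2 * (1 + s * t i) ^ 2)
          (∑ i, (βs i) ^ 2 * (2 * t i)) 0 :=
        HasDerivAt.fun_sum fun i _ => (hpow i).const_mul ((βs i) ^ 2)
      have h2 : HasDerivAt (fun s : ℝ => ∑ i, |βs i| ^ q * (1 + s * t i) ^ q)
          (∑ i, |βs i| ^ q * (q * t i)) 0 :=
        HasDerivAt.fun_sum fun i _ => (hrpow i).const_mul (|βs i| ^ q)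
      have h3 := (h1.const_mul lam2).fun_add (h2.const_mul lam1)
      rw [hψdef]
      refine HasDerivAt.congr_deriv h3 ?_
      symm
      simp only [hwdef, Finset.mul_sum, ← Finset.sum_neg_distrib,
        ← Finset.sum_add_distrib]
      exact Finset.sum_congr rfl fun i _ => by ring
    have htend : Filter.Tendsto (fun s => (ψ 0 - ψ s) / s)
        (nhdsWithin 0 (Set.Ioi 0)) (nhds (∑ i, w i * t i)) := by
      have h1 := hasDerivAt_iff_tendsto_slope.1 hder
      have h2 := (h1.mono_left
        (nhdsWithin_mono 0 (fun x hx => ne_of_gt hx))).neg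
      have h3 : (fun s => -(slope ψ 0 s)) = fun s => (ψ 0 - ψ s) / s := by
        funext s
        simp only [slope, sub_zero, vsub_eq_sub, smul_eq_mul]
        rw [div_eq_inv_mul]
        ring
      rw [h3, neg_neg] at h2
      exact h2
    set T : ℝ := (∑ i, |t i|) + 1 with hTdef
    have hTpos : 0 < T := by positivity
    have habs : ∀ i, |t i| ≤ T := by
      intro i
      have h := Finset.single_le_sum (f := fun i => |t i|)
        (fun i _ => abs_nonneg _) (Finset.mem_univ i)
      rw [hTdef]; linarith
    set C : ℝ := Real.sqrt (∑ i, (t i * βs i) ^ 2) with hCdef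
    have hC0 : 0 ≤ C := Real.sqrt_nonneg _
    set ε : ℝ := min (min 1 (1 / (2 * T))) (δ / (2 * (C + 1))) with hεdef
    have hεpos : 0 < ε :=
      lt_min (lt_min one_pos (by positivity)) (by positivity)
    have hev : ∀ᶠ s in nhdsWithin 0 (Set.Ioi 0),
        (ψ 0 - ψ s) / s ≤ g (z₀ + M t) - g z₀ := by
      filter_upwards [Ioc_mem_nhdsGT hεpos]
        with s hs
      obtain ⟨hs0, hsε⟩ := hs
      have hs1 : s ≤ 1 := le_trans hsε (le_trans (min_le_left _ _) (min_le_left _ _))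
      have hpos : ∀ i, 0 < 1 + s * t i := by
        intro i
        have h1 : s * |t i| ≤ (1 / (2 * T)) * T :=
          mul_le_mul (le_trans hsε (le_trans (min_le_left _ _) (min_le_right _ _)))
            (habs i) (abs_nonneg _) (by positivity)
        have h2 : (1 / (2 * T)) * T = 1 / 2 := by
          field_simp
        have h3 : -(s * t i) ≤ s * |t i| := by
          calc -(s * t i) ≤ |s * t i| := neg_le_abs _
            _ = s * |t i| := by rw [abs_mul, abs_of_pos hs0]
        linarith
      set β' : Fin p → ℝ := fun i => βs i + s * (βs i * t i) with hβ'def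
      have hdist : Real.sqrt (∑ i, (β' i - βs i) ^ 2) < δ := by
        have he : ∀ i ∈ Finset.univ, (β' i - βs i) ^ 2 = s ^ 2 * (t i * βs i) ^ 2 := by
          intro i _; rw [hβ'def]; ring
        rw [Finset.sum_congr rfl he, ← Finset.mul_sum,
          Real.sqrt_mul (sq_nonneg s), Real.sqrt_sq hs0.le, ← hCdef]
        have hsC : s * C ≤ (δ / (2 * (C + 1))) * C :=
          mul_le_mul_of_nonneg_right (le_trans hsε (min_le_right _ _)) hC0
        have hlt : (δ / (2 * (C + 1))) * C < δ := by
          rw [div_mul_eq_mul_div, div_lt_iff₀ (by positivity)]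
          nlinarith
        linarith
      have hobj := hmin β' hdist
      have hmv : X.mulVec β' = z₀ + s • M t := by
        have hb : β' = βs + s • (fun i => βs i * t i) := by
          funext i
          simp only [hβ'def, Pi.add_apply, Pi.smul_apply, smul_eq_mul]
        rw [hb, Matrix.mulVec_add, Matrix.mulVec_smul, hMapp, hz₀def]
      have hsum2 : ∑ i, β' i ^ 2 = ∑ i, (βs i) ^ 2 * (1 + s * t i) ^ 2 := by
        refine Finset.sum_congr rfl fun i _ => ?_
        rw [hβ'def]; ring
      have hsumq : ∑ i, |β' i| ^ q = ∑ i, |βs i| ^ q * (1 + s * t i) ^ q := by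
        refine Finset.sum_congr rfl fun i _ => ?_
        have h1 : β' i = βs i * (1 + s * t i) := by rw [hβ'def]; ring
        rw [h1, abs_mul, abs_of_pos (hpos i),
          Real.mul_rpow (abs_nonneg _) (hpos i).le]
      have hψ0 : ψ 0 = lam2 * ∑ i, (βs i) ^ 2 + lam1 * ∑ i, |βs i| ^ q := by
        rw [hψdef]
        norm_num [Real.one_rpow]
      have key1 : g z₀ + ψ 0 ≤ g (z₀ + s • M t) + ψ s := by
        have e1 : objF r X y lam1 lam2 q βs = g z₀ + ψ 0 := by
          simp only [objF, hψ0, hgapp, ← hz₀def]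
          ring
        have e2 : objF r X y lam1 lam2 q β' = g (z₀ + s • M t) + ψ s := by
          simp only [objF, hmv, hgapp, hψdef, hsum2, hsumq]
          ring
        rw [← e1, ← e2]
        exact hobj
      have hcomb : g (z₀ + s • M t) ≤ (1 - s) * g z₀ + s * g (z₀ + M t) := by
        have h : z₀ + s • M t = (1 - s) • z₀ + s • (z₀ + M t) := by
          funext j
          simp only [Pi.add_apply, Pi.smul_apply, smul_eq_mul]
          ring
        have hg := gcomb z₀ (z₀ + M t) s hs0.le hs1
        rw [← h] at hg
        exact hg
      rw [div_le_iff₀ hs0]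
      nlinarith [key1, hcomb]
    exact le_of_tendsto htend hev
  -- difference quotients
  set Q : (Fin n → ℝ) → ℝ → ℝ := fun u s => (g (z₀ + s • u) - g z₀) / s with hQdef
  have hQapp : ∀ u s, Q u s = (g (z₀ + s • u) - g z₀) / s := fun _ _ => rfl
  have hQmono : ∀ (u : Fin n → ℝ) (s1 s2 : ℝ), 0 < s1 → s1 ≤ s2 →
      Q u s1 ≤ Q u s2 := by
    intro u s1 s2 h1 h12
    have h2 : 0 < s2 := lt_of_lt_of_le h1 h12
    have hc0 : 0 ≤ s1 / s2 := by positivity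
    have hc1 : s1 / s2 ≤ 1 := by rw [div_le_one h2]; exact h12
    have h : z₀ + s1 • u = (1 - s1 / s2) • z₀ + (s1 / s2) • (z₀ + s2 • u) := by
      funext j
      simp only [Pi.add_apply, Pi.smul_apply, smul_eq_mul]
      field_simp <;> ring
    have hg := gcomb z₀ (z₀ + s2 • u) (s1 / s2) hc0 hc1
    rw [← h] at hg
    have hg' : s2 * g (z₀ + s1 • u) ≤ (s2 - s1) * g z₀ + s1 * g (z₀ + s2 • u) := by
      have hh := mul_le_mul_of_nonneg_left hg h2.le
      have e : s2 * ((1 - s1 / s2) * g z₀ + s1 / s2 * g (z₀ + s2 • u))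
          = (s2 - s1) * g z₀ + s1 * g (z₀ + s2 • u) := by
        field_simp <;> ring
      rw [e] at hh
      exact hh
    rw [hQapp, hQapp, div_le_div_iff₀ h1 h2]
    linarith
  have hQlb : ∀ (u : Fin n → ℝ) (s : ℝ), 0 < s → g z₀ - g (z₀ - u) ≤ Q u s := by
    intro u s hs
    have h1s : (0:ℝ) < 1 + s := by linarith
    have hc0 : 0 ≤ 1 / (1 + s) := by positivity
    have hc1 : 1 / (1 + s) ≤ 1 := by rw [div_le_one h1s]; linarith
    have h : z₀ = (1 - 1 / (1 + s)) • (z₀ - u) + (1 / (1 + s)) • (z₀ + s • u) := by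
      funext j
      simp only [Pi.add_apply, Pi.sub_apply, Pi.smul_apply, smul_eq_mul]
      field_simp <;> ring
    have hg := gcomb (z₀ - u) (z₀ + s • u) (1 / (1 + s)) hc0 hc1
    rw [← h] at hg
    have hg' : (1 + s) * g z₀ ≤ s * g (z₀ - u) + g (z₀ + s • u) := by
      have hh := mul_le_mul_of_nonneg_left hg h1s.le
      have e : (1 + s) * ((1 - 1 / (1 + s)) * g (z₀ - u)
          + 1 / (1 + s) * g (z₀ + s • u))
          = s * g (z₀ - u) + g (z₀ + s • u) := by
        field_simp <;> ring
      rw [e] at hh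
      exact hh
    rw [hQapp, le_div_iff₀ hs]
    linarith
  have hQne : ∀ u : Fin n → ℝ, (Q u '' Set.Ioi 0).Nonempty :=
    fun u => ⟨Q u 1, ⟨1, Set.mem_Ioi.2 one_pos, rfl⟩⟩
  have hQbdd : ∀ u : Fin n → ℝ, BddBelow (Q u '' Set.Ioi 0) := by
    intro u
    refine ⟨g z₀ - g (z₀ - u), ?_⟩
    rintro x ⟨s, hs, rfl⟩
    exact hQlb u s hs
  set N : (Fin n → ℝ) → ℝ := fun u => sInf (Q u '' Set.Ioi 0) with hNdef
  have hNle : ∀ (u : Fin n → ℝ) (s : ℝ), 0 < s → N u ≤ Q u s := by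
    intro u s hs
    exact csInf_le (hQbdd u) ⟨s, hs, rfl⟩
  have hleN : ∀ (u : Fin n → ℝ) (b : ℝ), (∀ s : ℝ, 0 < s → b ≤ Q u s) → b ≤ N u := by
    intro u b hb
    apply le_csInf (hQne u)
    rintro x ⟨s, hs, rfl⟩
    exact hb s hs
  have hQscale : ∀ (u : Fin n → ℝ) (c s : ℝ), 0 < c → 0 < s →
      Q (c • u) s = c * Q u (c * s) := by
    intro u c s hc hs
    have h : z₀ + s • c • u = z₀ + (c * s) • u := by
      funext j
      simp only [Pi.add_apply, Pi.smul_apply, smul_eq_mul]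
      ring
    rw [hQapp, hQapp, h]
    field_simp
  have hNhom : ∀ c : ℝ, 0 < c → ∀ u : Fin n → ℝ, N (c • u) = c * N u := by
    intro c hc u
    apply le_antisymm
    · rw [← div_le_iff₀' hc]
      apply hleN
      intro s hs
      have h1 := hNle (c • u) (s / c) (by positivity)
      have e : c * (s / c) = s := by field_simp
      rw [hQscale u c (s / c) hc (by positivity), e] at h1
      rw [div_le_iff₀' hc]
      exact h1
    · apply hleN
      intro s hs
      rw [hQscale u c s hc hs]
      exact mul_le_mul_of_nonneg_left (hNle u (c * s) (by positivity)) hc.le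
  have hQmid : ∀ (u v : Fin n → ℝ) (s : ℝ), 0 < s →
      Q (u + v) s ≤ Q u (2 * s) + Q v (2 * s) := by
    intro u v s hs
    have h : z₀ + s • (u + v)
        = (1 - 1/2 : ℝ) • (z₀ + (2*s) • u) + (1/2 : ℝ) • (z₀ + (2*s) • v) := by
      funext j
      simp only [Pi.add_apply, Pi.smul_apply, smul_eq_mul]
      ring
    have hg := gcomb (z₀ + (2*s) • u) (z₀ + (2*s) • v) (1/2) (by norm_num) (by norm_num)
    rw [← h] at hg
    have hg2 := mul_le_mul_of_nonneg_left hg hs.le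
    rw [hQapp, hQapp, hQapp, ← add_div, div_le_div_iff₀ hs (by linarith)]
    nlinarith [hg2]
  have hNadd : ∀ u v : Fin n → ℝ, N (u + v) ≤ N u + N v := by
    intro u v
    by_contra hcon
    push_neg at hcon
    set ε := (N (u + v) - (N u + N v)) / 2 with hεdef2
    have hε : 0 < ε := by rw [hεdef2]; linarith
    obtain ⟨x1, hx1mem, hx1⟩ := exists_lt_of_csInf_lt (hQne u)
      (show sInf (Q u '' Set.Ioi 0) < N u + ε from lt_add_of_pos_right _ hε)
    obtain ⟨s1, hs1, rfl⟩ := hx1mem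
    obtain ⟨x2, hx2mem, hx2⟩ := exists_lt_of_csInf_lt (hQne v)
      (show sInf (Q v '' Set.Ioi 0) < N v + ε from lt_add_of_pos_right _ hε)
    obtain ⟨s2, hs2, rfl⟩ := hx2mem
    rw [Set.mem_Ioi] at hs1 hs2
    set s := min s1 s2 / 2 with hsdef
    have hs : 0 < s := by rw [hsdef]; positivity
    have h2s1 : 2 * s ≤ s1 := by
      rw [hsdef]; have := min_le_left s1 s2; linarith
    have h2s2 : 2 * s ≤ s2 := by
      rw [hsdef]; have := min_le_right s1 s2; linarith
    have hchain : N (u + v) < N (u + v) := by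
      calc N (u + v) ≤ Q (u + v) s := hNle _ _ hs
        _ ≤ Q u (2*s) + Q v (2*s) := hQmid u v s hs
        _ ≤ Q u s1 + Q v s2 := add_le_add
            (hQmono u _ _ (by linarith) h2s1) (hQmono v _ _ (by linarith) h2s2)
        _ < (N u + ε) + (N v + ε) := add_lt_add hx1 hx2
        _ = N (u + v) := by rw [hεdef2]; ring
    exact absurd hchain (lt_irrefl _)
  -- the linear functional on Fin p → ℝ
  set ℓw : (Fin p → ℝ) →ₗ[ℝ] ℝ :=
    { toFun := fun t => ∑ i, w i * t i
      map_add' := by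
        intro a b
        simp only [Pi.add_apply, mul_add, Finset.sum_add_distrib]
      map_smul' := by
        intro c a
        simp only [Pi.smul_apply, smul_eq_mul, RingHom.id_apply, Finset.mul_sum]
        exact Finset.sum_congr rfl fun i _ => by ring } with hℓwdef
  have hℓwapp : ∀ t, ℓw t = ∑ i, w i * t i := fun _ => rfl
  have hker : LinearMap.ker M ≤ LinearMap.ker ℓw := by
    intro t ht
    rw [LinearMap.mem_ker] at ht ⊢
    have h1 := KEY t
    rw [ht, add_zero, sub_self] at h1
    have h2 := KEY (-t)
    rw [map_neg, ht, neg_zero, add_zero, sub_self] at h2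
    have h3 : ∑ i, w i * (-t) i = -∑ i, w i * t i := by
      simp [mul_neg, Finset.sum_neg_distrib]
    rw [h3] at h2
    rw [hℓwapp]
    linarith
  set fq := Submodule.liftQ (LinearMap.ker M) ℓw hker with hfqdef
  set f : LinearMap.range M →ₗ[ℝ] ℝ :=
    fq.comp M.quotKerEquivRange.symm.toLinearMap with hfdef
  have hfapp : ∀ (t : Fin p → ℝ) (h : M t ∈ LinearMap.range M),
      f ⟨M t, h⟩ = ∑ i, w i * t i := by
    intro t h
    have he : M.quotKerEquivRange.symm ⟨M t, h⟩ = Submodule.Quotient.mk t := by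
      rw [LinearEquiv.symm_apply_eq]
      exact Subtype.ext (M.quotKerEquivRange_apply_mk t).symm
    rw [hfdef]
    simp only [LinearMap.comp_apply, LinearEquiv.coe_coe]
    rw [he, Submodule.liftQ_apply]
    exact hℓwapp t
  have hfle : ∀ x : (⟨LinearMap.range M, f⟩ : (Fin n → ℝ) →ₗ.[ℝ] ℝ).domain,
      (⟨LinearMap.range M, f⟩ : (Fin n → ℝ) →ₗ.[ℝ] ℝ) x ≤ N x := by
    rintro ⟨x, hx⟩
    obtain ⟨t, rfl⟩ := hx
    show f ⟨M t, ⟨t, rfl⟩⟩ ≤ N (M t)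
    rw [hfapp t ⟨t, rfl⟩]
    apply hleN
    intro s hs
    have h := KEY (s • t)
    rw [map_smul] at h
    have e : ∑ i, w i * (s • t) i = s * ∑ i, w i * t i := by
      rw [Finset.mul_sum]
      exact Finset.sum_congr rfl fun i _ => by
        simp only [Pi.smul_apply, smul_eq_mul]; ring
    rw [e] at h
    rw [hQapp, le_div_iff₀ hs]
    linarith
  obtain ⟨vl, hvl, hvN⟩ := exists_extension_of_le_sublinear
    ⟨LinearMap.range M, f⟩ N hNhom hNadd hfle
  set v : Fin n → ℝ := fun j => vl (fun k => if j = k then 1 else 0) with hvdef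
  have hvsum : ∀ u : Fin n → ℝ, ∑ j, v j * u j = vl u := by
    intro u
    rw [LinearMap.pi_apply_eq_sum_univ vl u]
    exact Finset.sum_congr rfl fun j _ => by
      rw [hvdef, smul_eq_mul, mul_comm]
  refine ⟨v, ?_, ?_⟩
  · intro z
    have h1 : vl (z - z₀) ≤ N (z - z₀) := hvN _
    have h2 : N (z - z₀) ≤ Q (z - z₀) 1 := hNle _ 1 one_pos
    have h3 : Q (z - z₀) 1 = g z - g z₀ := by
      rw [hQapp, one_smul, add_sub_cancel, div_one]
    have h4 : ∑ j, v j * (z j - z₀ j) = vl (z - z₀) := by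
      rw [← hvsum]
      exact Finset.sum_congr rfl fun j _ => by simp [Pi.sub_apply]
    rw [← hz₀def, ← hgapp z₀, ← hgapp z, h4]
    linarith
  · intro i
    set ei : Fin p → ℝ := fun k => if k = i then 1 else 0 with heidef
    have hmem : M ei ∈ LinearMap.range M := ⟨ei, rfl⟩
    have h1 : vl (M ei) = ∑ k, w k * ei k := by
      have hh := hvl ⟨M ei, hmem⟩
      rw [show ((⟨LinearMap.range M, f⟩ : (Fin n → ℝ) →ₗ.[ℝ] ℝ) ⟨M ei, hmem⟩)
        = f ⟨M ei, hmem⟩ from rfl] at hh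
      rw [hh, hfapp ei hmem]
    have h2 : ∑ k, w k * ei k = w i := by
      rw [heidef]
      simp
    have h4 : ∀ j, (M ei) j = X j i * βs i := by
      intro j
      rw [hMapp]
      have e : ∀ k ∈ Finset.univ, X j k * (βs k * ei k)
          = if k = i then X j i * βs i else 0 := by
        intro k _
        rw [heidef]
        by_cases hk : k = i
        · subst hk; simp
        · simp [hk]
      show ∑ k, X j k * (βs k * ei k) = X j i * βs i
      rw [Finset.sum_congr rfl e, Finset.sum_ite_eq' Finset.univ i
        (fun _ => X j i * βs i)]
      simp
    have h6 := hvsum (M ei)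
    rw [h1, h2] at h6
    have h5 : βs i * (∑ j, X j i * v j) = w i := by
      rw [← h6, Finset.mul_sum]
      exact Finset.sum_congr rfl fun j _ => by rw [h4 j]; ring
    have h7 : w i = -(2 * lam2 * βs i ^ 2 + lam1 * q * |βs i| ^ q) := by
      rw [hwdef]
    rw [h5, h7]
    ring
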